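/- Let n ≥ 2 and m ≥ 3. Then the polynomial x₁^n + x₂^n + x₃^n ∈ ℂ[x₁,…,x_m] cannot be written as a product of homogeneous polynomials of degree 1; that is, there are no homogeneous degree-1 polynomials g₁,…,g_n ∈ ℂ[x₁,…,x_m] with x₁^n + x₂^n + x₃^n = g₁·g₂·⋯·g_n. -/
import Mathlib
set_option maxHeartbeats 1000000


open MvPolynomial

/-- A finitely supported function of degree 1 is a single. -/
lemma degree_one_eq_single {σ : Type*} (d : σ →₀ ℕ) (hd : d.degree = 1) :
    ∃ i, d = Finsupp.single i 1 := by
  classical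
  have hsum : ∑ i ∈ d.support, d i = 1 := hd
  have hne : d.support.Nonempty := by
    by_contra h
    rw [Finset.not_nonempty_iff_eq_empty] at h
    simp [h] at hsum
  obtain ⟨i, hi⟩ := hne
  have hdi1 : 1 ≤ d i := Nat.one_le_iff_ne_zero.mpr (Finsupp.mem_support_iff.mp hi)
  have hdile : d i ≤ 1 := hsum ▸ Finset.single_le_sum (fun _ _ => Nat.zero_le _) hi
  refine ⟨i, Finsupp.ext fun j => ?_⟩
  rcases eq_or_ne j i with rfl | hji
  · rw [Finsupp.single_eq_same]; omega
  · rw [Finsupp.single_apply, if_neg (by exact fun h => hji h.symm)]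
    by_contra hj
    have hjmem : j ∈ d.support := Finsupp.mem_support_iff.mpr hj
    have hsub : ({i, j} : Finset σ) ⊆ d.support := by
      intro x hx
      rcases Finset.mem_insert.mp hx with rfl | hx
      · exact hi
      · rwa [Finset.mem_singleton.mp hx]
    have h2 : d i + d j ≤ ∑ k ∈ d.support, d k := by
      rw [← Finset.sum_pair (fun h => hji h.symm)]
      exact Finset.sum_le_sum_of_subset hsub
    omega

lemma eval_homog_one {m : ℕ} (g : MvPolynomial (Fin m) ℂ) (hg : g.IsHomogeneous 1)
    (p : Fin m → ℂ) :
    eval p g = ∑ i, coeff (Finsupp.single i 1) g * p i := by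
  classical
  rw [eval_eq]
  have hsub : g.support ⊆ Finset.univ.image (fun i => Finsupp.single i 1) := by
    intro d hd
    have hdeg : d.degree = 1 := by
      by_contra h
      exact Finsupp.mem_support_iff.mp hd (hg.coeff_eq_zero h)
    obtain ⟨i, rfl⟩ := degree_one_eq_single d hdeg
    exact Finset.mem_image.mpr ⟨i, Finset.mem_univ i, rfl⟩
  rw [Finset.sum_subset hsub (fun d _ hd => by
    rw [MvPolynomial.notMem_support_iff.mp hd, zero_mul])]
  rw [Finset.sum_image (fun a _ b _ h => Finsupp.single_left_injective one_ne_zero h)]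
  refine Finset.sum_congr rfl fun i _ => ?_
  congr 1
  rw [Finsupp.support_single_ne_zero i one_ne_zero]
  simp

lemma core (n : ℕ) (hn : 2 ≤ n) (u v : ℂ) : ∃ t : ℂ, 1 + t ^ n + (u + v * t) ^ n ≠ 0 := by
  by_contra h
  push_neg at h
  have hn0 : n ≠ 0 := by omega
  have hu : u ^ n = -1 := by
    have h0 := h 0
    rw [zero_pow hn0] at h0
    simp only [add_zero, mul_zero] at h0
    linear_combination h0
  have hune : u ≠ 0 := by
    intro h'
    rw [h', zero_pow hn0] at hu
    norm_num at hu
  by_cases hv : v = 0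
  · have h1 := h 1
    rw [hv, one_pow, zero_mul, add_zero, hu] at h1
    norm_num at h1
  · obtain ⟨ζ, hζn, hζ1⟩ : ∃ ζ : ℂ, ζ ^ n = 1 ∧ ζ ≠ 1 := by
      obtain hprim := Complex.isPrimitiveRoot_exp n hn0
      exact ⟨_, hprim.pow_eq_one, hprim.ne_one (by omega)⟩
    have h2 := h (u * (ζ - 1) / v)
    have key : u + v * (u * (ζ - 1) / v) = u * ζ := by field_simp; ring
    rw [key, mul_pow, hζn, mul_one, hu] at h2
    have : (u * (ζ - 1) / v) ^ n = 0 := by linear_combination h2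
    have := pow_eq_zero_iff hn0 |>.mp this
    have := div_eq_zero_iff.mp this
    rcases this with h' | h'
    · rcases mul_eq_zero.mp h' with h'' | h''
      · exact hune h''
      · exact hζ1 (by linear_combination h'')
    · exact hv h'

/-- Given coefficients α β γ, find a point on the plane where the Fermat value is nonzero. -/
lemma plane_point (n : ℕ) (hn : 2 ≤ n) (α β γ : ℂ) :
    ∃ x y z : ℂ, α * x + β * y + γ * z = 0 ∧ x ^ n + y ^ n + z ^ n ≠ 0 := by
  have hn0 : n ≠ 0 := by omega
  by_cases hγ : γ ≠ 0
  · obtain ⟨t, ht⟩ := core n hn (-α / γ) (-β / γ)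
    refine ⟨1, t, -α / γ + -β / γ * t, ?_, ?_⟩
    · field_simp
      ring
    · rwa [one_pow]
  · push_neg at hγ
    by_cases hβ : β ≠ 0
    · obtain ⟨t, ht⟩ := core n hn (-α / β) 0
      refine ⟨1, -α / β, t, ?_, ?_⟩
      · rw [hγ]; field_simp; ring
      · intro hzero
        apply ht
        rw [zero_mul, add_zero]
        rw [one_pow] at hzero
        linear_combination hzero
    · push_neg at hβ
      refine ⟨0, 1, 0, by rw [hβ, hγ]; ring, ?_⟩
      rw [zero_pow hn0, one_pow]
      norm_num

/-- Let `n ≥ 2` and `m ≥ 3`.  Then `x₁^n + x₂^n + x₃^n ∈ ℂ[x₁,…,x_m]` cannot be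
written as a product of `n` homogeneous polynomials of degree 1. -/
theorem fermat_not_in_chow
    (m n : ℕ) (hn : 2 ≤ n) (hm : 3 ≤ m) :
    ¬ ∃ g : Fin n → MvPolynomial (Fin m) ℂ,
        (∀ i, (g i).IsHomogeneous 1) ∧
        (MvPolynomial.X (⟨0, by omega⟩ : Fin m)) ^ n +
          (MvPolynomial.X (⟨1, by omega⟩ : Fin m)) ^ n +
          (MvPolynomial.X (⟨2, by omega⟩ : Fin m)) ^ n = ∏ i, g i := by
  classical
  rintro ⟨g, hg, hEq⟩
  set i0 : Fin m := ⟨0, by omega⟩ with hi0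
  set i1 : Fin m := ⟨1, by omega⟩ with hi1
  set i2 : Fin m := ⟨2, by omega⟩ with hi2
  have hne01 : i0 ≠ i1 := by simp [hi0, hi1, Fin.ext_iff]
  have hne02 : i0 ≠ i2 := by simp [hi0, hi2, Fin.ext_iff]
  have hne12 : i1 ≠ i2 := by simp [hi1, hi2, Fin.ext_iff]
  set g0 : MvPolynomial (Fin m) ℂ := g ⟨0, by omega⟩ with hg0
  set a : Fin m → ℂ := fun i => coeff (Finsupp.single i 1) g0 with ha
  -- key vanishing: whenever g0 vanishes at p, so does the Fermat polynomial
  have hvanish : ∀ p : Fin m → ℂ, eval p g0 = 0 →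
      p i0 ^ n + p i1 ^ n + p i2 ^ n = 0 := by
    intro p hp
    have := congrArg (eval p) hEq
    simp only [map_add, map_pow, eval_X, map_prod] at this
    rw [this]
    exact Finset.prod_eq_zero (Finset.mem_univ ⟨0, by omega⟩) hp
  have heval : ∀ p : Fin m → ℂ, eval p g0 = ∑ i, a i * p i :=
    fun p => eval_homog_one g0 (hg _) p
  -- find the bad point
  by_cases hout : ∃ j : Fin m, j ≠ i0 ∧ j ≠ i1 ∧ j ≠ i2 ∧ a j ≠ 0
  · obtain ⟨j, hj0, hj1, hj2, hja⟩ := hout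
    set p : Fin m → ℂ := fun k => if k = i0 then 1 else if k = j then -(a i0) / a j else 0 with hp
    have hsum : ∑ i, a i * p i = 0 := by
      rw [show ∑ i, a i * p i = ∑ i ∈ ({i0, j} : Finset (Fin m)), a i * p i from
        (Finset.sum_subset (Finset.subset_univ _) (fun k _ hk => by
          simp only [Finset.mem_insert, Finset.mem_singleton, not_or] at hk
          simp [hp, hk.1, hk.2])).symm]
      rw [Finset.sum_pair (Ne.symm hj0)]
      have hpi0 : p i0 = 1 := by simp [hp, Ne.symm hj0]
      have hpj : p j = -(a i0) / a j := by simp [hp, hj0]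
      rw [hpi0, hpj]
      field_simp
      ring
    have hval : p i0 ^ n + p i1 ^ n + p i2 ^ n ≠ 0 := by
      have h1 : p i1 = 0 := by simp [hp, hne01.symm, hj1.symm]
      have h2 : p i2 = 0 := by simp [hp, hne02.symm, hj2.symm]
      have h0 : p i0 = 1 := by simp [hp]
      rw [h0, h1, h2, one_pow, zero_pow (by omega : n ≠ 0)]
      norm_num
    exact hval (hvanish p (by rw [heval, hsum]))
  · push_neg at hout
    obtain ⟨x, y, z, hplane, hval⟩ := plane_point n hn (a i0) (a i1) (a i2)
    set p : Fin m → ℂ := fun k => if k = i0 then x else if k = i1 then y else if k = i2 then z else 0 with hp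
    have hsum : ∑ i, a i * p i = 0 := by
      rw [show ∑ i, a i * p i = ∑ i ∈ ({i0, i1, i2} : Finset (Fin m)), a i * p i from
        (Finset.sum_subset (Finset.subset_univ _) (fun k _ hk => by
          simp only [Finset.mem_insert, Finset.mem_singleton, not_or] at hk
          simp [hp, hk.1, hk.2.1, hk.2.2])).symm]
      rw [Finset.sum_insert (by simp [hne01, hne02]), Finset.sum_pair hne12]
      have h0 : p i0 = x := by simp [hp]
      have h1 : p i1 = y := by simp [hp, hne01.symm]
      have h2 : p i2 = z := by simp [hp, hne02.symm, hne12.symm]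
      rw [h0, h1, h2]
      linear_combination hplane
    have hval' : p i0 ^ n + p i1 ^ n + p i2 ^ n ≠ 0 := by
      have h0 : p i0 = x := by simp [hp]
      have h1 : p i1 = y := by simp [hp, hne01.symm]
      have h2 : p i2 = z := by simp [hp, hne02.symm, hne12.symm]
      rw [h0, h1, h2]; exact hval
    exact hval' (hvanish p (by rw [heval, hsum]))
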